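/- Let P : Cᵒᵖ → BoolAlg be a Boolean doctrine over a category C with finite products, let R : Dᵒᵖ → BoolAlg be a first-order Boolean doctrine, and let (M, 𝔪) : P → R be a Boolean doctrine morphism. Let ī, j̄ ∈ ℕ, let S, Y₁, …, Y_ī, Z₁, …, Z_j̄ ∈ C, let αᵢ ∈ P(S×Yᵢ) (i = 1, …, ī) and βⱼ ∈ P(S×Zⱼ) (j = 1, …, j̄). Suppose there are n ∈ ℕ, indices l₁, …, l_n ∈ {1, …, ī} and morphisms gᵢ : S × ∏_{j=1}^{j̄} Zⱼ → Y_{lᵢ} (i = 1, …, n) such that, in P(S × ∏_{j=1}^{j̄} Zⱼ), ⋀_{i=1}^{n} P(⟨pr₁, gᵢ⟩)(α_{lᵢ}) ≤ ⋁_{j=1}^{j̄} P(⟨pr₁, pr_{j+1}⟩)(βⱼ). Then, in R(M(S)), ⋀_{i=1}^{ī} ∀_{M(S)}^{M(Yᵢ)}(𝔪_{S×Yᵢ}(αᵢ)) ≤ ⋁_{j=1}^{j̄} ∀_{M(S)}^{M(Zⱼ)}(𝔪_{S×Zⱼ}(βⱼ)), where the values 𝔪_{S×Y}(−) ∈ R(M(S×Y))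 are transported along the canonical isomorphism M(S×Y) ≅ M(S)×M(Y). -/

import Mathlib

open CategoryTheory CategoryTheory.Limits Opposite

universe w v u v₁ u₁ v₂ u₂ v₃ u₃

namespace BooleanDoctrine

/-- Elements of a Boolean algebra in the category `BoolAlg` can be acted on by morphisms. -/
instance (X Y : BoolAlg) : FunLike (X ⟶ Y) X Y where
  coe f := ⇑f.hom
  coe_injective _ _ h := BoolAlg.hom_ext (DFunLike.coe_injective h)

/-- A filter of a Boolean algebra: contains `⊤`, closed under binary meets, upward closed. -/
def IsBAFilter {A : Type*} [BooleanAlgebra A] (F : Set A) : Prop :=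
  (⊤ : A) ∈ F ∧ (∀ a b : A, a ∈ F → b ∈ F → a ⊓ b ∈ F) ∧ ∀ a b : A, a ∈ F → a ≤ b → b ∈ F

/-- The fiber of a Boolean doctrine at an object of the base category. -/
abbrev fiber {C : Type u₁} [Category.{v₁} C] (P : Cᵒᵖ ⥤ BoolAlg.{w}) (X : C) : Type w :=
  P.obj (op X)

/-- A universal filter for a Boolean doctrine `P : Cᵒᵖ ⥤ BoolAlg`. -/
def IsUniversalFilter {C : Type u₁} [Category.{v₁} C] [HasFiniteProducts C]
    (P : Cᵒᵖ ⥤ BoolAlg.{w}) (F : ∀ X : C, Set (P.obj (op X))) : Prop :=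
  (∀ (X Y : C) (f : X ⟶ Y) (α : P.obj (op Y)), α ∈ F Y → P.map f.op α ∈ F X) ∧
    ∀ X : C, IsBAFilter (F X)

/-- A universal ideal for a Boolean doctrine `P : Cᵒᵖ ⥤ BoolAlg`. -/
def IsUniversalIdeal {C : Type u₁} [Category.{v₁} C] [HasFiniteProducts C]
    (P : Cᵒᵖ ⥤ BoolAlg.{w}) (I : ∀ X : C, Set (P.obj (op X))) : Prop :=
  (∀ (X Y : C) (m : ℕ) (f : Fin m → (X ⟶ Y)) (α : P.obj (op Y)),
      (Finset.univ.inf fun j => P.map (f j).op α) ∈ I X → α ∈ I Y) ∧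
    (∀ (X : C) (a b : P.obj (op X)), a ≤ b → b ∈ I X → a ∈ I X) ∧
    (∀ (X₁ X₂ : C) (α₁ : P.obj (op X₁)) (α₂ : P.obj (op X₂)), α₁ ∈ I X₁ → α₂ ∈ I X₂ →
      P.map (prod.fst : X₁ ⨯ X₂ ⟶ X₁).op α₁ ⊔ P.map (prod.snd : X₁ ⨯ X₂ ⟶ X₂).op α₂ ∈
        I (X₁ ⨯ X₂)) ∧
    (⊥ : P.obj (op (⊤_ C))) ∈ I (⊤_ C)

/-- A universal ultrafilter for a Boolean doctrine `P : Cᵒᵖ ⥤ BoolAlg`. -/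
def IsUniversalUltrafilter {C : Type u₁} [Category.{v₁} C] [HasFiniteProducts C]
    (P : Cᵒᵖ ⥤ BoolAlg.{w}) (F : ∀ X : C, Set (P.obj (op X))) : Prop :=
  (∀ (X Y : C) (f : X ⟶ Y) (α : P.obj (op Y)), α ∈ F Y → P.map f.op α ∈ F X) ∧
    (∀ X : C, IsBAFilter (F X)) ∧
    (∀ (X₁ X₂ : C) (α₁ : P.obj (op X₁)) (α₂ : P.obj (op X₂)),
      P.map (prod.fst : X₁ ⨯ X₂ ⟶ X₁).op α₁ ⊔ P.map (prod.snd : X₁ ⨯ X₂ ⟶ X₂).op α₂ ∈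
          F (X₁ ⨯ X₂) →
        α₁ ∈ F X₁ ∨ α₂ ∈ F X₂) ∧
    (⊥ : P.obj (op (⊤_ C))) ∉ F (⊤_ C)

/-- Richness of a Boolean doctrine with respect to a family of subsets of the fibers. -/
def IsRich {C : Type u₁} [Category.{v₁} C] [HasFiniteProducts C]
    (P : Cᵒᵖ ⥤ BoolAlg.{w}) (F : ∀ X : C, Set (P.obj (op X))) : Prop :=
  ∀ (X : C) (α : P.obj (op X)), α ∉ F X → ∃ c : (⊤_ C) ⟶ X, P.map c.op α ∉ F (⊤_ C)

/-- The failure of the "universal closure" of `a` witnessed by a constant `c : ⊤ ⟶ X`. -/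
def IsRichAt {C : Type u₁} [Category.{v₁} C] [HasFiniteProducts C]
    (P : Cᵒᵖ ⥤ BoolAlg.{w}) (F : ∀ X : C, Set (P.obj (op X)))
    (X : C) (a : P.obj (op X)) : Prop :=
  ∃ c : (⊤_ C) ⟶ X, P.map c.op a ∉ F (⊤_ C)

/-- The universal filter generated by a family of subsets of the fibers: the intersection of
all universal filters containing the family componentwise. -/
def genUnivFilter {C : Type u₁} [Category.{v₁} C] [HasFiniteProducts C]
    (P : Cᵒᵖ ⥤ BoolAlg.{w}) (A : ∀ X : C, Set (P.obj (op X))) :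
    ∀ X : C, Set (P.obj (op X)) := fun X =>
  {φ | ∀ G : ∀ X' : C, Set (P.obj (op X')),
    IsUniversalFilter P G → (∀ X', A X' ⊆ G X') → φ ∈ G X}

/-- The universal ideal generated by a family of subsets of the fibers: the intersection of
all universal ideals containing the family componentwise. -/
def genUnivIdeal {C : Type u₁} [Category.{v₁} C] [HasFiniteProducts C]
    (P : Cᵒᵖ ⥤ BoolAlg.{w}) (A : ∀ X : C, Set (P.obj (op X))) :
    ∀ X : C, Set (P.obj (op X)) := fun X =>
  {φ | ∀ J : ∀ X' : C, Set (P.obj (op X')),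
    IsUniversalIdeal P J → (∀ X', A X' ⊆ J X') → φ ∈ J X}

/-- The family of subsets of the fibers placing the element `α i` in the component `Y i`. -/
def familyOfPoints {C : Type u₁} [Category.{v₁} C] (P : Cᵒᵖ ⥤ BoolAlg.{w}) {ι : Type u₃}
    (Y : ι → C) (α : ∀ i, P.obj (op (Y i))) : ∀ X : C, Set (P.obj (op X)) := fun X =>
  {a | ∃ (i : ι) (h : Y i = X), a = P.map (eqToHom h.symm).op (α i)}

/-- The subsets doctrine, sending a set to its powerset Boolean algebra and a function to
its preimage map. -/
def subsetsDoctrine : (Type v)ᵒᵖ ⥤ BoolAlg.{v} where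
  obj X := BoolAlg.of (Set X.unop)
  map f := BoolAlg.ofHom
    { toFun := fun S => f.unop ⁻¹' S
      map_sup' := fun _ _ => rfl
      map_inf' := fun _ _ => rfl
      map_top' := rfl
      map_bot' := rfl }
  map_id _ := rfl
  map_comp _ _ := rfl

/-- A Boolean doctrine morphism: a finite-product-preserving functor together with a
natural transformation. -/
structure DoctrineHom {C : Type u₁} [Category.{v₁} C] {D : Type u₂} [Category.{v₂} D]
    (P : Cᵒᵖ ⥤ BoolAlg.{w}) (R : Dᵒᵖ ⥤ BoolAlg.{w}) where
  functor : C ⥤ D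
  preserves : PreservesFiniteProducts functor
  trans : P ⟶ functor.op ⋙ R

/-- Composition of Boolean doctrine morphisms. -/
def DoctrineHom.comp {C : Type u₁} [Category.{v₁} C] {D : Type u₂} [Category.{v₂} D]
    {E : Type u₃} [Category.{v₃} E]
    {P : Cᵒᵖ ⥤ BoolAlg.{w}} {R : Dᵒᵖ ⥤ BoolAlg.{w}} {S : Eᵒᵖ ⥤ BoolAlg.{w}}
    (Φ : DoctrineHom P R) (Ψ : DoctrineHom R S) : DoctrineHom P S where
  functor := Φ.functor ⋙ Ψ.functor
  preserves := by
    have := Φ.preserves; have := Ψ.preserves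
    infer_instance
  trans := Φ.trans ≫ Functor.whiskerLeft Φ.functor.op Ψ.trans

/-- A first-order structure on a Boolean doctrine: fiberwise right adjoints to reindexing
along first projections, satisfying the Beck–Chevalley condition. -/
structure FOStructure {C : Type u₁} [Category.{v₁} C] [HasFiniteProducts C]
    (P : Cᵒᵖ ⥤ BoolAlg.{w}) where
  fa : ∀ X Y : C, P.obj (op (X ⨯ Y)) → P.obj (op X)
  adj : ∀ (X Y : C) (α : P.obj (op X)) (β : P.obj (op (X ⨯ Y))),
      α ≤ fa X Y β ↔ P.map (prod.fst : X ⨯ Y ⟶ X).op α ≤ β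
  bc : ∀ (X X' Y : C) (f : X' ⟶ X) (β : P.obj (op (X ⨯ Y))),
      P.map f.op (fa X Y β) = fa X' Y (P.map (prod.map f (𝟙 Y)).op β)

/-- The existential quantifier `∃ = ¬∀¬` associated to a first-order structure. -/
noncomputable def FOStructure.ex {C : Type u₁} [Category.{v₁} C] [HasFiniteProducts C]
    {P : Cᵒᵖ ⥤ BoolAlg.{w}} (fo : FOStructure P) (X Y : C)
    (β : P.obj (op (X ⨯ Y))) : P.obj (op X) :=
  (fo.fa X Y βᶜ)ᶜ

/-- The canonical comparison morphism `M X ⨯ M Y ⟶ M (X ⨯ Y)` of a Boolean doctrine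
morphism, inverse to the product comparison morphism. -/
noncomputable def DoctrineHom.prodPair {C : Type u₁} [Category.{v₁} C] [HasFiniteProducts C]
    {D : Type u₂} [Category.{v₂} D] [HasFiniteProducts D]
    {P : Cᵒᵖ ⥤ BoolAlg.{w}} {R : Dᵒᵖ ⥤ BoolAlg.{w}} (Φ : DoctrineHom P R) (X Y : C) :
    (Φ.functor.obj X ⨯ Φ.functor.obj Y) ⟶ Φ.functor.obj (X ⨯ Y) :=
  letI := Φ.preserves
  (PreservesLimitPair.iso Φ.functor X Y).inv

/-- The image of an element of `P (X ⨯ Y)` in `R (M X ⨯ M Y)`, transported along the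
canonical isomorphism `M (X ⨯ Y) ≅ M X ⨯ M Y`. -/
noncomputable def DoctrineHom.transProd {C : Type u₁} [Category.{v₁} C] [HasFiniteProducts C]
    {D : Type u₂} [Category.{v₂} D] [HasFiniteProducts D]
    {P : Cᵒᵖ ⥤ BoolAlg.{w}} {R : Dᵒᵖ ⥤ BoolAlg.{w}} (Φ : DoctrineHom P R) (X Y : C)
    (α : P.obj (op (X ⨯ Y))) : R.obj (op (Φ.functor.obj X ⨯ Φ.functor.obj Y)) :=
  R.map (Φ.prodPair X Y).op (Φ.trans.app (op (X ⨯ Y)) α)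

/-- A Boolean doctrine morphism between first-order Boolean doctrines is first-order when it
commutes with the universal quantifiers. -/
def DoctrineHom.IsFO {C : Type u₁} [Category.{v₁} C] [HasFiniteProducts C]
    {D : Type u₂} [Category.{v₂} D] [HasFiniteProducts D]
    {P : Cᵒᵖ ⥤ BoolAlg.{w}} {R : Dᵒᵖ ⥤ BoolAlg.{w}} (Φ : DoctrineHom P R)
    (foP : FOStructure P) (foR : FOStructure R) : Prop :=
  ∀ (X Y : C) (β : P.obj (op (X ⨯ Y))),
    (Φ.trans.app (op X) (foP.fa X Y β) : R.obj (op (Φ.functor.obj X))) =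
      foR.fa (Φ.functor.obj X) (Φ.functor.obj Y) (Φ.transProd X Y β)

/-- The Boolean doctrine morphism with identity functor part induced by a natural
transformation between two doctrines over the same base. -/
def idDoctrineHom {C : Type u₁} [Category.{v₁} C] {P Q : Cᵒᵖ ⥤ BoolAlg.{w}} (η : P ⟶ Q) :
    DoctrineHom P Q where
  functor := 𝟭 C
  preserves := inferInstance
  trans := η

/-- A quantifier completion of a Boolean doctrine `P`: a first-order Boolean doctrine `Q`
over the same base category together with a Boolean doctrine morphism `(𝟭 C, ι) : P ⟶ Q`
whose functor part is the identity, such that every Boolean doctrine morphism from `P` to a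
first-order Boolean doctrine factors uniquely through it via a first-order Boolean doctrine
morphism. -/
structure QuantifierCompletion.{w', v', u', v₁', u₁'} {C : Type u₁'} [Category.{v₁'} C]
    [HasFiniteProducts C] (P : Cᵒᵖ ⥤ BoolAlg.{w'}) where
  Q : Cᵒᵖ ⥤ BoolAlg.{w'}
  fo : FOStructure Q
  ι : P ⟶ Q
  univ : ∀ {D : Type u'} [Category.{v'} D] [HasFiniteProducts D]
      (R : Dᵒᵖ ⥤ BoolAlg.{w'}) (foR : FOStructure R) (Φ : DoctrineHom P R),
      ∃! Ψ : DoctrineHom Q R, Ψ.IsFO fo foR ∧ Φ = (idDoctrineHom ι).comp Ψ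

/-- A propositional model of a Boolean doctrine: a Boolean doctrine morphism to the
subsets doctrine. -/
abbrev PropModel {C : Type u} [Category.{v} C] (P : Cᵒᵖ ⥤ BoolAlg.{v}) :=
  DoctrineHom P subsetsDoctrine.{v}

/-- The subset of `M X` interpreting an element `α ∈ P X` in a propositional model. -/
def PropModel.interp {C : Type u} [Category.{v} C] {P : Cᵒᵖ ⥤ BoolAlg.{v}}
    (M : PropModel P) {X : C} (α : P.obj (op X)) : Set (M.functor.obj X) :=
  M.trans.app (op X) α



/-- The object map of a Boolean doctrine morphism. -/
abbrev DoctrineHom.onObj {C : Type u₁} [Category.{v₁} C] {D : Type u₂} [Category.{v₂} D]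
    {P : Cᵒᵖ ⥤ BoolAlg.{w}} {R : Dᵒᵖ ⥤ BoolAlg.{w}} (Φ : DoctrineHom P R) (X : C) : D :=
  Φ.functor.obj X

/-- The component at `X` of the natural transformation of a Boolean doctrine morphism,
applied to an element of the fiber. -/
abbrev DoctrineHom.appAt {C : Type u₁} [Category.{v₁} C] {D : Type u₂} [Category.{v₂} D]
    {P : Cᵒᵖ ⥤ BoolAlg.{w}} {R : Dᵒᵖ ⥤ BoolAlg.{w}} (Φ : DoctrineHom P R) (X : C)
    (a : P.obj (op X)) : R.obj (op (Φ.functor.obj X)) :=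
  Φ.trans.app (op X) a

section Helpers
set_option linter.unusedSectionVars false

variable {D : Type u₂} [Category.{v₂} D] [HasFiniteProducts D] {R : Dᵒᵖ ⥤ BoolAlg.{w}}

lemma rmap_mono {X Y : D} (f : X ⟶ Y) {a b : R.obj (op Y)} (h : a ≤ b) :
    R.map f.op a ≤ R.map f.op b :=
  OrderHomClass.mono (show BoundedLatticeHom (R.obj (op Y)) (R.obj (op X)) from (R.map f.op).hom) h

lemma rmap_comp_apply {X Y Z : D} (f : X ⟶ Y) (g : Y ⟶ Z) (a : R.obj (op Z)) :
    R.map (f ≫ g).op a = R.map f.op (R.map g.op a) := by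
  rw [op_comp, R.map_comp]; rfl

lemma rmap_sup {X Y : D} (f : X ⟶ Y) (a b : R.obj (op Y)) :
    R.map f.op (a ⊔ b) = R.map f.op a ⊔ R.map f.op b :=
  map_sup (show BoundedLatticeHom (R.obj (op Y)) (R.obj (op X)) from (R.map f.op).hom) a b

lemma rmap_finset_sup {X Y : D} (f : X ⟶ Y) {ι : Type*} (s : Finset ι) (g : ι → R.obj (op Y)) :
    R.map f.op (s.sup g) = s.sup (fun i => R.map f.op (g i)) :=
  map_finset_sup (show BoundedLatticeHom (R.obj (op Y)) (R.obj (op X)) from (R.map f.op).hom) s g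

lemma rmap_finset_inf {X Y : D} (f : X ⟶ Y) {ι : Type*} (s : Finset ι) (g : ι → R.obj (op Y)) :
    R.map f.op (s.inf g) = s.inf (fun i => R.map f.op (g i)) :=
  map_finset_inf (show BoundedLatticeHom (R.obj (op Y)) (R.obj (op X)) from (R.map f.op).hom) s g

lemma rmap_sdiff {X Y : D} (f : X ⟶ Y) (a b : R.obj (op Y)) :
    R.map f.op (a \ b) = R.map f.op a \ R.map f.op b :=
  map_sdiff' (show BoundedLatticeHom (R.obj (op Y)) (R.obj (op X)) from (R.map f.op).hom) a b

lemma rmap_bot {X Y : D} (f : X ⟶ Y) : R.map f.op (⊥ : R.obj (op Y)) = ⊥ :=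
  map_bot (show BoundedLatticeHom (R.obj (op Y)) (R.obj (op X)) from (R.map f.op).hom)

variable (fo : FOStructure R)

lemma fa_counit (X Y : D) (b : R.obj (op (X ⨯ Y))) :
    R.map (prod.fst : X ⨯ Y ⟶ X).op (fo.fa X Y b) ≤ b :=
  (fo.adj X Y (fo.fa X Y b) b).1 le_rfl

lemma fa_mono (X Y : D) {a b : R.obj (op (X ⨯ Y))} (h : a ≤ b) :
    fo.fa X Y a ≤ fo.fa X Y b :=
  (fo.adj X Y _ _).2 (le_trans (fa_counit fo X Y a) h)

/-- Dual Frobenius inequality. -/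
lemma fa_frob (X Y : D) (φ : R.obj (op X)) (ψ : R.obj (op (X ⨯ Y))) :
    fo.fa X Y (R.map (prod.fst : X ⨯ Y ⟶ X).op φ ⊔ ψ) ≤ φ ⊔ fo.fa X Y ψ := by
  rw [← sdiff_le_iff]
  apply (fo.adj X Y _ _).2
  rw [rmap_sdiff]
  calc R.map (prod.fst : X ⨯ Y ⟶ X).op (fo.fa X Y (R.map (prod.fst : X ⨯ Y ⟶ X).op φ ⊔ ψ)) \
        R.map (prod.fst : X ⨯ Y ⟶ X).op φ
      ≤ (R.map (prod.fst : X ⨯ Y ⟶ X).op φ ⊔ ψ) \ R.map (prod.fst : X ⨯ Y ⟶ X).op φ :=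
        sdiff_le_sdiff_right (fa_counit fo X Y _)
    _ ≤ ψ := sdiff_le_iff.2 le_rfl

lemma fa_bot_le (X W : D) (s : X ⟶ X ⨯ W) (hs : s ≫ prod.fst = 𝟙 X) :
    fo.fa X W ⊥ ≤ (⊥ : R.obj (op X)) := by
  have h1 : fo.fa X W ⊥ = R.map s.op (R.map (prod.fst : X ⨯ W ⟶ X).op (fo.fa X W ⊥)) := by
    rw [← rmap_comp_apply, hs, op_id, R.map_id]; rfl
  rw [h1, ← rmap_bot (R := R) s]
  exact rmap_mono s (fa_counit fo X W ⊥)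

lemma sup_univ_fin_succ {A : Type*} [SemilatticeSup A] [OrderBot A] (n : ℕ)
    (f : Fin (n + 1) → A) :
    Finset.univ.sup f = f 0 ⊔ Finset.univ.sup (fun k : Fin n => f k.succ) := by
  rw [Fin.univ_succ, Finset.sup_cons, Finset.sup_map]
  rfl

/-- The key first-order fact: the universal quantifier over a finite product distributes
over a disjunction whose disjuncts each depend on a single factor. -/
lemma fa_sup_pi : ∀ (n : ℕ) (X : D) (Z : Fin n → D) (b : ∀ j, R.obj (op (X ⨯ Z j))),
    fo.fa X (∏ᶜ Z) (Finset.univ.sup fun j =>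
        R.map (prod.lift (prod.fst : X ⨯ ∏ᶜ Z ⟶ X)
          ((prod.snd : X ⨯ ∏ᶜ Z ⟶ ∏ᶜ Z) ≫ Pi.π Z j)).op (b j)) ≤
      Finset.univ.sup fun j => fo.fa X (Z j) (b j) := by
  intro n
  induction n with
  | zero =>
    intro X Z b
    simp only [Finset.univ_eq_empty, Finset.sup_empty]
    exact fa_bot_le fo X (∏ᶜ Z) (prod.lift (𝟙 X) (Pi.lift (fun j => j.elim0)))
      (prod.lift_fst _ _)
  | succ n ih =>
    intro X Z b
    set Z' : Fin n → D := fun k => Z k.succ with hZ'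
    set γ : R.obj (op (X ⨯ ∏ᶜ Z)) := Finset.univ.sup fun j =>
        R.map (prod.lift (prod.fst : X ⨯ ∏ᶜ Z ⟶ X)
          ((prod.snd : X ⨯ ∏ᶜ Z ⟶ ∏ᶜ Z) ≫ Pi.π Z j)).op (b j) with hγ
    set u : (X ⨯ Z 0) ⨯ ∏ᶜ Z' ⟶ X ⨯ ∏ᶜ Z :=
      prod.lift (prod.fst ≫ prod.fst)
        (Pi.lift (fun j : Fin (n + 1) => Fin.cases
          ((prod.fst : (X ⨯ Z 0) ⨯ ∏ᶜ Z' ⟶ X ⨯ Z 0) ≫ prod.snd)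
          (fun k => (prod.snd : (X ⨯ Z 0) ⨯ ∏ᶜ Z' ⟶ ∏ᶜ Z') ≫ Pi.π Z' k) j)) with hu
    -- Step A
    have stepA : fo.fa X (∏ᶜ Z) γ ≤
        fo.fa X (Z 0) (fo.fa (X ⨯ Z 0) (∏ᶜ Z') (R.map u.op γ)) := by
      apply (fo.adj _ _ _ _).2
      apply (fo.adj _ _ _ _).2
      have e : R.map (prod.fst : (X ⨯ Z 0) ⨯ ∏ᶜ Z' ⟶ X ⨯ Z 0).op
          (R.map (prod.fst : X ⨯ Z 0 ⟶ X).op (fo.fa X (∏ᶜ Z) γ)) =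
          R.map u.op (R.map (prod.fst : X ⨯ ∏ᶜ Z ⟶ X).op (fo.fa X (∏ᶜ Z) γ)) := by
        rw [← rmap_comp_apply, ← rmap_comp_apply, hu, prod.lift_fst]
      rw [e]
      exact rmap_mono u (fa_counit fo X (∏ᶜ Z) γ)
    -- morphism identities
    have e0 : u ≫ prod.lift (prod.fst : X ⨯ ∏ᶜ Z ⟶ X)
        ((prod.snd : X ⨯ ∏ᶜ Z ⟶ ∏ᶜ Z) ≫ Pi.π Z 0) =
        (prod.fst : (X ⨯ Z 0) ⨯ ∏ᶜ Z' ⟶ X ⨯ Z 0) := by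
      apply Limits.prod.hom_ext
      · rw [Category.assoc, prod.lift_fst, hu, prod.lift_fst]
      · rw [Category.assoc, prod.lift_snd, ← Category.assoc, hu, prod.lift_snd, Pi.lift_π]
        rfl
    have ek : ∀ k : Fin n, u ≫ prod.lift (prod.fst : X ⨯ ∏ᶜ Z ⟶ X)
        ((prod.snd : X ⨯ ∏ᶜ Z ⟶ ∏ᶜ Z) ≫ Pi.π Z k.succ) =
        prod.lift (prod.fst : (X ⨯ Z 0) ⨯ ∏ᶜ Z' ⟶ X ⨯ Z 0)
          ((prod.snd : (X ⨯ Z 0) ⨯ ∏ᶜ Z' ⟶ ∏ᶜ Z') ≫ Pi.π Z' k) ≫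
          prod.map (prod.fst : X ⨯ Z 0 ⟶ X) (𝟙 (Z k.succ)) := by
      intro k
      apply Limits.prod.hom_ext
      · rw [Category.assoc, prod.lift_fst, hu, prod.lift_fst, Category.assoc, prod.map_fst,
          prod.lift_fst_assoc]
      · rw [Category.assoc, prod.lift_snd, ← Category.assoc, hu, prod.lift_snd, Pi.lift_π,
          Category.assoc, prod.map_snd, Category.comp_id, prod.lift_snd]
        rfl
    set b' : ∀ k : Fin n, R.obj (op ((X ⨯ Z 0) ⨯ Z' k)) := fun k =>
      R.map (prod.map (prod.fst : X ⨯ Z 0 ⟶ X) (𝟙 (Z k.succ))).op (b k.succ) with hb'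
    -- Step B: compute u* γ
    have stepB : R.map u.op γ =
        R.map (prod.fst : (X ⨯ Z 0) ⨯ ∏ᶜ Z' ⟶ X ⨯ Z 0).op (b 0) ⊔
          Finset.univ.sup (fun k : Fin n =>
            R.map (prod.lift (prod.fst : (X ⨯ Z 0) ⨯ ∏ᶜ Z' ⟶ X ⨯ Z 0)
              ((prod.snd : (X ⨯ Z 0) ⨯ ∏ᶜ Z' ⟶ ∏ᶜ Z') ≫ Pi.π Z' k)).op (b' k)) := by
      rw [hγ, rmap_finset_sup, sup_univ_fin_succ]
      congr 1
      · rw [← rmap_comp_apply, e0]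
      · apply Finset.sup_congr rfl
        intro k _
        rw [← rmap_comp_apply, ek k, rmap_comp_apply, hb']
    -- Step D
    have stepD : fo.fa (X ⨯ Z 0) (∏ᶜ Z') (R.map u.op γ) ≤
        b 0 ⊔ Finset.univ.sup (fun k : Fin n =>
          R.map (prod.fst : X ⨯ Z 0 ⟶ X).op (fo.fa X (Z k.succ) (b k.succ))) := by
      rw [stepB]
      refine le_trans (fa_frob fo _ _ _ _) (sup_le_sup_left ?_ (b 0))
      refine le_trans (ih (X ⨯ Z 0) Z' b') ?_
      refine Finset.sup_le fun k _ => ?_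
      have hbk : fo.fa (X ⨯ Z 0) (Z' k) (b' k) =
          R.map (prod.fst : X ⨯ Z 0 ⟶ X).op (fo.fa X (Z k.succ) (b k.succ)) := by
        rw [hb']
        exact (fo.bc X (X ⨯ Z 0) (Z k.succ) prod.fst (b k.succ)).symm
      rw [hbk]
      exact Finset.le_sup (f := fun k : Fin n =>
        R.map (prod.fst : X ⨯ Z 0 ⟶ X).op (fo.fa X (Z k.succ) (b k.succ))) (Finset.mem_univ k)
    -- Step E
    calc fo.fa X (∏ᶜ Z) γ
        ≤ fo.fa X (Z 0) (fo.fa (X ⨯ Z 0) (∏ᶜ Z') (R.map u.op γ)) := stepA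
      _ ≤ fo.fa X (Z 0) (b 0 ⊔ Finset.univ.sup (fun k : Fin n =>
            R.map (prod.fst : X ⨯ Z 0 ⟶ X).op (fo.fa X (Z k.succ) (b k.succ)))) :=
          fa_mono fo _ _ stepD
      _ = fo.fa X (Z 0) (R.map (prod.fst : X ⨯ Z 0 ⟶ X).op
            (Finset.univ.sup (fun k : Fin n => fo.fa X (Z k.succ) (b k.succ))) ⊔ b 0) := by
          rw [rmap_finset_sup, sup_comm]
      _ ≤ Finset.univ.sup (fun k : Fin n => fo.fa X (Z k.succ) (b k.succ)) ⊔
            fo.fa X (Z 0) (b 0) := fa_frob fo _ _ _ _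
      _ = Finset.univ.sup fun j => fo.fa X (Z j) (b j) := by
          rw [sup_univ_fin_succ n (fun j => fo.fa X (Z j) (b j)), sup_comm]

end Helpers

set_option maxHeartbeats 2000000 in
theorem stmt18 {C : Type u₁} [Category.{v₁} C] [HasFiniteProducts C]
    {D : Type u₂} [Category.{v₂} D] [HasFiniteProducts D]
    (P : Cᵒᵖ ⥤ BoolAlg.{w}) (R : Dᵒᵖ ⥤ BoolAlg.{w}) (foR : FOStructure R)
    (Φ : DoctrineHom P R) {ibar jbar : ℕ} (S : C) (Y : Fin ibar → C) (Z : Fin jbar → C)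
    (α : ∀ i, P.obj (op (S ⨯ Y i))) (β : ∀ j, P.obj (op (S ⨯ Z j)))
    (h : ∃ (n : ℕ) (l : Fin n → Fin ibar) (g : ∀ i : Fin n, (S ⨯ ∏ᶜ Z) ⟶ Y (l i)),
        (Finset.univ.inf fun i =>
            P.map (prod.lift (prod.fst : S ⨯ ∏ᶜ Z ⟶ S) (g i)).op (α (l i))) ≤
          Finset.univ.sup fun j =>
            P.map (prod.lift (prod.fst : S ⨯ ∏ᶜ Z ⟶ S)
              ((prod.snd : S ⨯ ∏ᶜ Z ⟶ ∏ᶜ Z) ≫ Pi.π Z j)).op (β j)) :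
    (Finset.univ.inf fun i =>
        foR.fa (Φ.functor.obj S) (Φ.functor.obj (Y i)) (Φ.transProd S (Y i) (α i))) ≤
      Finset.univ.sup fun j =>
        foR.fa (Φ.functor.obj S) (Φ.functor.obj (Z j)) (Φ.transProd S (Z j) (β j)) := by
  obtain ⟨n, l, g, hle⟩ := h
  letI := Φ.preserves
  letI : PreservesLimitsOfShape (Discrete (Fin jbar)) Φ.functor :=
    Φ.preserves.preserves jbar
  set M := Φ.functor with hM
  set MZ : Fin jbar → D := fun j => M.obj (Z j) with hMZ
  set q : (∏ᶜ MZ) ⟶ M.obj (∏ᶜ Z) := (PreservesProduct.iso M Z).inv with hq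
  set w : (M.obj S ⨯ ∏ᶜ MZ) ⟶ M.obj (S ⨯ ∏ᶜ Z) :=
    prod.map (𝟙 (M.obj S)) q ≫ Φ.prodPair S (∏ᶜ Z) with hw
  -- prodPair is inverse to the comparison iso
  have hpp_cancel : ∀ (A B : C),
      (PreservesLimitPair.iso M A B).hom ≫ Φ.prodPair A B = 𝟙 _ := by
    intro A B
    unfold DoctrineHom.prodPair
    exact Iso.hom_inv_id _
  have hpp_fst : ∀ (A B : C),
      Φ.prodPair A B ≫ M.map (prod.fst : A ⨯ B ⟶ A) = prod.fst := by
    intro A B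
    unfold DoctrineHom.prodPair
    rw [← prodComparison_fst M A B, ← PreservesLimitPair.iso_hom, Iso.inv_hom_id_assoc]
  have hpp_snd : ∀ (A B : C),
      Φ.prodPair A B ≫ M.map (prod.snd : A ⨯ B ⟶ B) = prod.snd := by
    intro A B
    unfold DoctrineHom.prodPair
    rw [← prodComparison_snd M A B, ← PreservesLimitPair.iso_hom, Iso.inv_hom_id_assoc]
  have hqπ : ∀ j : Fin jbar, q ≫ M.map (Pi.π Z j) = Pi.π MZ j := by
    intro j
    rw [hq, ← piComparison_comp_π M Z j, ← PreservesProduct.iso_hom, Iso.inv_hom_id_assoc]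
  have hwfst : w ≫ M.map (prod.fst : S ⨯ ∏ᶜ Z ⟶ S) = prod.fst := by
    rw [hw, Category.assoc, hpp_fst S (∏ᶜ Z), prod.map_fst, Category.comp_id]
  have hwsnd : w ≫ M.map (prod.snd : S ⨯ ∏ᶜ Z ⟶ ∏ᶜ Z) = prod.snd ≫ q := by
    rw [hw, Category.assoc, hpp_snd S (∏ᶜ Z), prod.map_snd]
  -- the two families of reindexing morphisms
  set hh : ∀ i : Fin n, (M.obj S ⨯ ∏ᶜ MZ) ⟶ (M.obj S ⨯ M.obj (Y (l i))) := fun i =>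
    w ≫ M.map (prod.lift prod.fst (g i)) ≫ (PreservesLimitPair.iso M S (Y (l i))).hom
    with hhh
  set kk : ∀ j : Fin jbar, (M.obj S ⨯ ∏ᶜ MZ) ⟶ (M.obj S ⨯ M.obj (Z j)) := fun j =>
    w ≫ M.map (prod.lift prod.fst (prod.snd ≫ Pi.π Z j)) ≫
      (PreservesLimitPair.iso M S (Z j)).hom with hkk
  have hhfst : ∀ i : Fin n, hh i ≫ prod.fst = prod.fst := by
    intro i
    rw [hhh]
    simp only [Category.assoc, PreservesLimitPair.iso_hom, prodComparison_fst,
      ← Functor.map_comp, prod.lift_fst]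
    exact hwfst
  have kkeq : ∀ j : Fin jbar,
      kk j = prod.lift prod.fst ((prod.snd : M.obj S ⨯ ∏ᶜ MZ ⟶ ∏ᶜ MZ) ≫ Pi.π MZ j) := by
    intro j
    apply Limits.prod.hom_ext
    · rw [prod.lift_fst, hkk]
      simp only [Category.assoc, PreservesLimitPair.iso_hom, prodComparison_fst,
        ← Functor.map_comp, prod.lift_fst]
      exact hwfst
    · rw [prod.lift_snd, hkk]
      simp only [Category.assoc, PreservesLimitPair.iso_hom, prodComparison_snd,
        ← Functor.map_comp, prod.lift_snd]
      rw [Functor.map_comp, ← Category.assoc, hwsnd, Category.assoc, hqπ j]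
  -- naturality of the transformation, elementwise
  have nat : ∀ {A B : C} (f : A ⟶ B) (x : P.obj (op B)),
      Φ.trans.app (op A) (P.map f.op x) =
        R.map (M.map f).op (Φ.trans.app (op B) x) := by
    intro A B f x
    calc Φ.trans.app (op A) (P.map f.op x) = (P.map f.op ≫ Φ.trans.app (op A)) x := rfl
      _ = (Φ.trans.app (op B) ≫ R.map (M.map f).op) x := by rw [Φ.trans.naturality f.op]; rfl
      _ = R.map (M.map f).op (Φ.trans.app (op B) x) := rfl
  have key_eq : ∀ (B : C) (e : (S ⨯ ∏ᶜ Z) ⟶ S ⨯ B) (x : P.obj (op (S ⨯ B))),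
      R.map w.op (Φ.trans.app (op (S ⨯ ∏ᶜ Z)) (P.map e.op x)) =
        R.map (w ≫ M.map e ≫ (PreservesLimitPair.iso M S B).hom).op
          (Φ.transProd S B x) := by
    intro B e x
    rw [DoctrineHom.transProd, ← rmap_comp_apply]
    have hcomp : (w ≫ M.map e ≫ (PreservesLimitPair.iso M S B).hom) ≫ Φ.prodPair S B =
        w ≫ M.map e := by
      simp only [Category.assoc, hpp_cancel, Category.comp_id]
    rw [hcomp, rmap_comp_apply w (M.map e), ← nat e x]
  have app_inf : ∀ {ι : Type} (s : Finset ι) (f : ι → P.obj (op (S ⨯ ∏ᶜ Z))),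
      Φ.trans.app (op (S ⨯ ∏ᶜ Z)) (s.inf f) =
        s.inf (fun i => Φ.trans.app (op (S ⨯ ∏ᶜ Z)) (f i)) := fun s f =>
    map_finset_inf (show BoundedLatticeHom (P.obj (op (S ⨯ ∏ᶜ Z)))
      (R.obj (op (M.obj (S ⨯ ∏ᶜ Z)))) from (Φ.trans.app (op (S ⨯ ∏ᶜ Z))).hom) s f
  have app_sup : ∀ {ι : Type} (s : Finset ι) (f : ι → P.obj (op (S ⨯ ∏ᶜ Z))),
      Φ.trans.app (op (S ⨯ ∏ᶜ Z)) (s.sup f) =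
        s.sup (fun i => Φ.trans.app (op (S ⨯ ∏ᶜ Z)) (f i)) := fun s f =>
    map_finset_sup (show BoundedLatticeHom (P.obj (op (S ⨯ ∏ᶜ Z)))
      (R.obj (op (M.obj (S ⨯ ∏ᶜ Z)))) from (Φ.trans.app (op (S ⨯ ∏ᶜ Z))).hom) s f
  have app_mono : ∀ {a b : P.obj (op (S ⨯ ∏ᶜ Z))}, a ≤ b →
      Φ.trans.app (op (S ⨯ ∏ᶜ Z)) a ≤ Φ.trans.app (op (S ⨯ ∏ᶜ Z)) b := fun hab =>
    OrderHomClass.mono (show BoundedLatticeHom (P.obj (op (S ⨯ ∏ᶜ Z)))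
      (R.obj (op (M.obj (S ⨯ ∏ᶜ Z)))) from (Φ.trans.app (op (S ⨯ ∏ᶜ Z))).hom) hab
  -- transported hypothesis
  have key : (Finset.univ.inf fun i =>
        R.map (hh i).op (Φ.transProd S (Y (l i)) (α (l i)))) ≤
      Finset.univ.sup fun j => R.map (kk j).op (Φ.transProd S (Z j) (β j)) := by
    have e1 : (Finset.univ.inf fun i =>
        R.map (hh i).op (Φ.transProd S (Y (l i)) (α (l i)))) =
        R.map w.op (Φ.trans.app (op (S ⨯ ∏ᶜ Z)) (Finset.univ.inf fun i =>
          P.map (prod.lift (prod.fst : S ⨯ ∏ᶜ Z ⟶ S) (g i)).op (α (l i)))) := by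
      rw [app_inf, rmap_finset_inf w]
      exact Finset.inf_congr rfl fun i _ =>
        (key_eq (Y (l i)) (prod.lift prod.fst (g i)) (α (l i))).symm
    have e2 : (Finset.univ.sup fun j =>
        R.map (kk j).op (Φ.transProd S (Z j) (β j))) =
        R.map w.op (Φ.trans.app (op (S ⨯ ∏ᶜ Z)) (Finset.univ.sup fun j =>
          P.map (prod.lift (prod.fst : S ⨯ ∏ᶜ Z ⟶ S)
            ((prod.snd : S ⨯ ∏ᶜ Z ⟶ ∏ᶜ Z) ≫ Pi.π Z j)).op (β j))) := by
      rw [app_sup, rmap_finset_sup w]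
      exact Finset.sup_congr rfl fun j _ =>
        (key_eq (Z j) (prod.lift prod.fst (prod.snd ≫ Pi.π Z j)) (β j)).symm
    rw [e1, e2]
    exact rmap_mono w (app_mono hle)
  -- the main inequality in the fiber over M S ⨯ ∏ MZ
  have final1 : R.map (prod.fst : M.obj S ⨯ ∏ᶜ MZ ⟶ M.obj S).op
      (Finset.univ.inf fun i =>
        foR.fa (M.obj S) (M.obj (Y i)) (Φ.transProd S (Y i) (α i))) ≤
      Finset.univ.sup fun j =>
        R.map (prod.lift (prod.fst : M.obj S ⨯ ∏ᶜ MZ ⟶ M.obj S)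
          ((prod.snd : M.obj S ⨯ ∏ᶜ MZ ⟶ ∏ᶜ MZ) ≫ Pi.π MZ j)).op
          (Φ.transProd S (Z j) (β j)) := by
    refine le_trans ?_ (le_trans key (le_of_eq
      (Finset.sup_congr rfl fun j _ => by rw [kkeq j])))
    refine Finset.le_inf fun i _ => ?_
    have c1 : R.map (prod.fst : M.obj S ⨯ ∏ᶜ MZ ⟶ M.obj S).op
        (Finset.univ.inf fun i' =>
          foR.fa (M.obj S) (M.obj (Y i')) (Φ.transProd S (Y i') (α i'))) ≤
        R.map (prod.fst : M.obj S ⨯ ∏ᶜ MZ ⟶ M.obj S).op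
          (foR.fa (M.obj S) (M.obj (Y (l i))) (Φ.transProd S (Y (l i)) (α (l i)))) :=
      rmap_mono _ (Finset.inf_le (Finset.mem_univ (l i)))
    have c2 : R.map (prod.fst : M.obj S ⨯ ∏ᶜ MZ ⟶ M.obj S).op
        (foR.fa (M.obj S) (M.obj (Y (l i))) (Φ.transProd S (Y (l i)) (α (l i)))) =
        R.map (hh i).op (R.map (prod.fst : M.obj S ⨯ M.obj (Y (l i)) ⟶ M.obj S).op
          (foR.fa (M.obj S) (M.obj (Y (l i))) (Φ.transProd S (Y (l i)) (α (l i))))) := by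
      rw [← rmap_comp_apply, hhfst i]
    calc R.map (prod.fst : M.obj S ⨯ ∏ᶜ MZ ⟶ M.obj S).op
          (Finset.univ.inf fun i' =>
            foR.fa (M.obj S) (M.obj (Y i')) (Φ.transProd S (Y i') (α i')))
        ≤ _ := c1
      _ = _ := c2
      _ ≤ R.map (hh i).op (Φ.transProd S (Y (l i)) (α (l i))) :=
          rmap_mono _ (fa_counit foR _ _ _)
  exact le_trans ((foR.adj (M.obj S) (∏ᶜ MZ) _ _).2 final1)
    (fa_sup_pi foR jbar (M.obj S) MZ (fun j => Φ.transProd S (Z j) (β j)))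

end BooleanDoctrine
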